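/- Let n ≥ 1 and k ≥ 1. There is a constant C = C(n, k) such that for all x, y ∈ ℝⁿ with |x − y| > 1, (∫₀^∞ |tᵏ ∂ᵏ/∂tᵏ p_t(x, y)|² dt/t)^{1/2} ≤ C |x − y|^{(k − n)/2 − 1/4} e^{−x₁ − y₁ − |x − y|}, where p_t(x, y) = (4πt)^{−n/2} e^{−x₁−y₁} e^{−t} e^{−|x−y|²/(4t)}. -/

import Mathlib

open Real MeasureTheory Set

noncomputable section
namespace St19

def ww (r t : ℝ) : ℝ := r^2/(4*t^2) - 1
def vv (t : ℝ) : ℝ := 1/t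
def mn (r : ℝ) (e : ℝ × ℕ × ℕ) (t : ℝ) : ℝ := e.1 * ww r t ^ e.2.1 * vv t ^ e.2.2
def SS (r : ℝ) (l : List (ℝ × ℕ × ℕ)) (t : ℝ) : ℝ := (l.map (fun e => mn r e t)).sum
def step (p : ℝ) (e : ℝ × ℕ × ℕ) : List (ℝ × ℕ × ℕ) :=
  [(-(2*(e.2.1:ℝ))*e.1, e.2.1, e.2.2+1), (-(2*(e.2.1:ℝ))*e.1, e.2.1 - 1, e.2.2+1),
   (-((e.2.2:ℝ))*e.1, e.2.1, e.2.2+1), (e.1, e.2.1+1, e.2.2), (p*e.1, e.2.1, e.2.2+1)]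
def steps (p : ℝ) : ℕ → List (ℝ × ℕ × ℕ)
  | 0 => [(1,0,0)]
  | (k+1) => (steps p k).flatMap (step p)
def FF (n : ℕ) (c r : ℝ) (s : ℝ) : ℝ :=
  (4*π*s) ^ (-(n:ℝ)/2) * c * Real.exp (-s) * Real.exp (-r^2/(4*s))
def uu (n : ℕ) (r t : ℝ) : ℝ :=
  (4*π*t) ^ (-(n:ℝ)/2) * Real.exp (-t) * Real.exp (-r^2/(4*t))
def GG (n k : ℕ) (r : ℝ) (a b : ℕ) (t : ℝ) : ℝ :=
  (t^k * uu n r t)^2 / t * (ww r t ^ a * vv t ^ b)^2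
def HH (n k : ℕ) (r : ℝ) (l : List (ℝ × ℕ × ℕ)) (t : ℝ) : ℝ :=
  (l.map (fun e => e.1^2 * GG n k r e.2.1 e.2.2 t)).sum
def sq2 (r y : ℝ) : ℝ := Real.sqrt (y^2 + 2*r)
def SG (r y : ℝ) : ℝ := (y + sq2 r y)/2
def TT (r y : ℝ) : ℝ := SG r y ^ 2

lemma invariant (p : ℝ) (k : ℕ) :
    ∀ e ∈ steps p k, k ≤ e.2.1 + 2 * e.2.2 := by
  induction k with
  | zero => intro e he; simp [steps] at he; subst he; simp
  | succ k ih =>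
    intro e he
    simp only [steps, List.mem_flatMap] at he
    obtain ⟨f, hf, he⟩ := he
    have hi := ih f hf
    simp only [step, List.mem_cons, List.not_mem_nil, or_false] at he
    rcases he with h|h|h|h|h <;> subst h <;> simp <;> omega

lemma hasDerivAt_ww (r t : ℝ) (ht : 0 < t) :
    HasDerivAt (ww r) (-2 * vv t * (ww r t + 1)) t := by
  have h1 : HasDerivAt (fun s : ℝ => 4*s^2) (4*(2*t)) t :=
    (hasDerivAt_pow 2 t).const_mul 4 |>.congr_deriv (by ring_nf)
  have h2 : HasDerivAt (fun s : ℝ => r^2/(4*s^2))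
      ((0 * (4*t^2) - r^2 * (4*(2*t))) / (4*t^2)^2) t :=
    (hasDerivAt_const t (r^2)).div h1 (by positivity)
  have h3 := h2.sub_const 1
  have : (0 * (4*t^2) - r^2 * (4*(2*t))) / (4*t^2)^2 = -2 * vv t * (ww r t + 1) := by
    unfold vv ww; field_simp; ring
  rw [this] at h3; exact h3

lemma hasDerivAt_vv (t : ℝ) (ht : 0 < t) :
    HasDerivAt vv (-(vv t)^2) t := by
  have := hasDerivAt_inv (ne_of_gt ht)
  have h : HasDerivAt vv (-(t^2)⁻¹) t := by
    unfold vv; simpa [one_div] using this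
  convert h using 1; unfold vv; field_simp

lemma hasDerivAt_mn (r : ℝ) (e : ℝ × ℕ × ℕ) (t : ℝ) (ht : 0 < t) :
    HasDerivAt (fun s => mn r e s)
      (-(2*(e.2.1:ℝ))*e.1 * ww r t ^ e.2.1 * vv t ^ (e.2.2+1)
        + (-(2*(e.2.1:ℝ))*e.1 * ww r t ^ (e.2.1 - 1) * vv t ^ (e.2.2+1)
        + (-((e.2.2:ℝ))*e.1 * ww r t ^ e.2.1 * vv t ^ (e.2.2+1)))) t := by
  obtain ⟨c, a, b⟩ := e
  have hw := (hasDerivAt_ww r t ht).pow a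
  have hv := (hasDerivAt_vv t ht).pow b
  have h := ((hw.mul hv).const_mul c)
  have harr : c * ((↑a * ww r t ^ (a - 1) * (-2 * vv t * (ww r t + 1))) * vv t ^ b
      + ww r t ^ a * (↑b * vv t ^ (b - 1) * -vv t ^ 2))
      = -(2*(a:ℝ))*c * ww r t ^ a * vv t ^ (b+1)
        + (-(2*(a:ℝ))*c * ww r t ^ (a - 1) * vv t ^ (b+1)
        + (-((b:ℝ))*c * ww r t ^ a * vv t ^ (b+1))) := by
    rcases a with _|a <;> rcases b with _|b <;> push_cast <;> ring
  have h2 := h.congr_deriv harr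
  simpa [mn, mul_assoc] using h2


lemma hasDerivAt_FF (n : ℕ) (c r t : ℝ) (ht : 0 < t) :
    HasDerivAt (FF n c r) (FF n c r t * ((-(n:ℝ)/2) * vv t + ww r t)) t := by
  have h4πt : (0:ℝ) < 4*π*t := by positivity
  set p : ℝ := -(n:ℝ)/2
  have h1 : HasDerivAt (fun s : ℝ => (4*π*s) ^ p) ((4*π*t)^p * (p * vv t)) t := by
    have hl : HasDerivAt (fun s : ℝ => 4*π*s) (4*π) t := by
      simpa using (hasDerivAt_id t).const_mul (4*π)
    have hr : HasDerivAt (fun x : ℝ => x ^ p) (p * (4*π*t) ^ (p-1)) (4*π*t) :=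
      Real.hasDerivAt_rpow_const (Or.inl (ne_of_gt h4πt))
    have := hr.comp t hl
    refine this.congr_deriv ?_
    rw [Real.rpow_sub h4πt, Real.rpow_one]
    unfold vv
    field_simp [vv]
  have h2 : HasDerivAt (fun s : ℝ => Real.exp (-s)) (-Real.exp (-t)) t := by
    simpa using (hasDerivAt_neg t).exp
  have h3 : HasDerivAt (fun s : ℝ => Real.exp (-r^2/(4*s))) (Real.exp (-r^2/(4*t)) * (r^2/(4*t^2))) t := by
    have hin : HasDerivAt (fun s : ℝ => -r^2/(4*s)) ((0 * (4*t) - (-r^2) * 4)/(4*t)^2) t :=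
      (hasDerivAt_const t (-r^2)).div (by simpa using (hasDerivAt_id t).const_mul 4) (by positivity)
    have := (Real.hasDerivAt_exp (-r^2/(4*t))).comp t hin
    refine this.congr_deriv ?_
    field_simp
    ring
  have h := ((h1.mul_const c).mul h2).mul h3
  refine h.congr_deriv ?_
  unfold FF ww vv
  simp only [Pi.mul_apply, p]
  field_simp
  ring

lemma hasDerivAt_FF_SS (n : ℕ) (c r : ℝ) (l : List (ℝ × ℕ × ℕ)) (t : ℝ) (ht : 0 < t) :
    HasDerivAt (fun s => FF n c r s * SS r l s)
      (FF n c r t * SS r (l.flatMap (step (-(n:ℝ)/2))) t) t := by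
  induction l with
  | nil => simpa [SS] using hasDerivAt_const t (0:ℝ)
  | cons e l ih =>
    have he : HasDerivAt (fun s => FF n c r s * mn r e s)
        (FF n c r t * SS r (step (-(n:ℝ)/2) e) t) t := by
      have h := (hasDerivAt_FF n c r t ht).mul (hasDerivAt_mn r e t ht)
      refine h.congr_deriv ?_
      obtain ⟨c', a, b⟩ := e
      simp only [SS, step, mn, List.map, List.sum_cons, List.sum_nil]
      ring
    have hsum := he.add ih
    have hfun : (fun s => FF n c r s * SS r (e :: l) s)
        = fun s => FF n c r s * mn r e s + FF n c r s * SS r l s := by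
      funext s; simp [SS, mul_add]
    rw [hfun]
    refine hsum.congr_deriv ?_
    simp [SS, step, mul_add]; ring

lemma iter_deriv_eq (n : ℕ) (c r : ℝ) (k : ℕ) (t : ℝ) (ht : 0 < t) :
    iteratedDeriv k (FF n c r) t = FF n c r t * SS r (steps (-(n:ℝ)/2) k) t := by
  induction k generalizing t with
  | zero => simp [steps, SS, mn]
  | succ k ih =>
    rw [iteratedDeriv_succ]
    have hev : (iteratedDeriv k (FF n c r)) =ᶠ[nhds t]
        (fun s => FF n c r s * SS r (steps (-(n:ℝ)/2) k) s) :=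
      Filter.eventuallyEq_of_mem (Ioi_mem_nhds ht) (fun s hs => ih s hs)
    rw [hev.deriv_eq]
    exact (hasDerivAt_FF_SS n c r _ t ht).deriv

variable {r y : ℝ}

lemma sq2_sq (hr : 0 < r) : sq2 r y ^ 2 = y^2 + 2*r :=
  Real.sq_sqrt (by positivity)

lemma abs_lt_sq2 (hr : 0 < r) : |y| < sq2 r y := by
  have h : |y| = Real.sqrt (y^2) := by rw [Real.sqrt_sq_eq_abs]
  rw [h]
  exact Real.sqrt_lt_sqrt (by positivity) (by linarith)

lemma sq2_pos (hr : 0 < r) : 0 < sq2 r y := lt_of_le_of_lt (abs_nonneg y) (abs_lt_sq2 hr)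

lemma SG_pos (hr : 0 < r) : 0 < SG r y := by
  have h1 := abs_lt_sq2 (y := y) hr
  have h2 := neg_abs_le y
  unfold SG; linarith

lemma TT_pos (hr : 0 < r) : 0 < TT r y := by
  have := SG_pos (y := y) hr; unfold TT; positivity

lemma k1 (hr : 0 < r) : 2 * TT r y - r = 2 * SG r y * y := by
  have hs := sq2_sq (y := y) hr
  unfold TT SG; nlinarith [hs]

lemma k2 (hr : 0 < r) : 2 * SG r y * sq2 r y = 2 * TT r y + r := by
  have hs := sq2_sq (y := y) hr
  unfold TT SG; nlinarith [hs]

lemma hasDerivAt_TT (hr : 0 < r) : HasDerivAt (TT r) (2 * TT r y / sq2 r y) y := by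
  have hy2 : (0:ℝ) < y^2 + 2*r := by positivity
  have hsq : HasDerivAt (fun y : ℝ => sq2 r y) (1/(2 * sq2 r y) * (2*y)) y := by
    have hin : HasDerivAt (fun y : ℝ => y^2 + 2*r) (2*y) y := by
      simpa using ((hasDerivAt_pow 2 y).add_const (2*r))
    exact (Real.hasDerivAt_sqrt (ne_of_gt hy2)).comp y hin
  have hSG : HasDerivAt (SG r) ((1 + 1/(2*sq2 r y) * (2*y))/2) y := by
    unfold SG
    exact ((hasDerivAt_id y).add hsq).div_const 2
  have hT : HasDerivAt (TT r) (2 * SG r y ^ 1 * ((1 + 1/(2*sq2 r y) * (2*y))/2)) y := by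
    unfold TT
    simpa using hSG.fun_pow 2
  refine hT.congr_deriv ?_
  have hs0 := sq2_pos (y := y) hr
  have h2σ : 2 * SG r y = y + sq2 r y := by unfold SG; ring
  have step1 : 2 * SG r y ^ 1 * ((1 + 1/(2*sq2 r y) * (2*y))/2)
      = SG r y * (y + sq2 r y) / sq2 r y := by
    field_simp
    ring
  rw [step1, ← h2σ]
  unfold TT
  ring

lemma TT_strictMono (hr : 0 < r) : StrictMono (TT r) := by
  refine strictMono_of_deriv_pos (fun y => ?_)
  rw [(hasDerivAt_TT hr).deriv]
  exact div_pos (by have := TT_pos (y := y) hr; linarith) (sq2_pos hr)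

lemma TT_range (hr : 0 < r) : Set.range (TT r) = Ioi 0 := by
  apply Set.Subset.antisymm
  · rintro _ ⟨y, rfl⟩; exact TT_pos hr
  · rintro t (ht : 0 < t)
    set st := Real.sqrt t with hst
    have hst0 : 0 < st := Real.sqrt_pos.mpr ht
    have hst2 : st^2 = t := Real.sq_sqrt ht.le
    refine ⟨(2*t - r)/(2*st), ?_⟩
    have hsq2 : sq2 r ((2*t - r)/(2*st)) = (2*t + r)/(2*st) := by
      unfold sq2
      have h : ((2*t - r)/(2*st))^2 + 2*r = ((2*t + r)/(2*st))^2 := by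
        field_simp; nlinarith [hst2]
      rw [h]
      exact Real.sqrt_sq (by positivity)
    unfold TT SG
    rw [hsq2]
    field_simp
    nlinarith [hst2]

lemma TT_lb (hr : 0 < r) : r^2/(4*(y^2 + 2*r)) ≤ TT r y := by
  have hs0 := sq2_pos (y := y) hr
  have hσ := SG_pos (y := y) hr
  have hy := abs_lt_sq2 (y := y) hr
  have hney : -sq2 r y < y := by have := neg_abs_le y; linarith [abs_lt_sq2 (y := y) hr]
  have hid : SG r y * (sq2 r y - y) = r := by
    have := sq2_sq (y := y) hr; unfold SG; nlinarith
  have h1 : r ≤ SG r y * (2 * sq2 r y) := by nlinarith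
  have h2 : r/(2*sq2 r y) ≤ SG r y := by
    rw [div_le_iff₀ (by linarith)]; linarith [h1]
  have h3 : (r/(2*sq2 r y))^2 ≤ SG r y ^2 := by
    apply pow_le_pow_left₀ (by positivity) h2
  calc r^2/(4*(y^2 + 2*r)) = (r/(2*sq2 r y))^2 := by
        rw [div_pow]; congr 1; rw [mul_pow]; rw [sq2_sq hr]; ring
    _ ≤ TT r y := h3

lemma TT_ub (hr : 0 < r) : TT r y ≤ y^2 + 2*r := by
  have hy := abs_lt_sq2 (y := y) hr
  have h1 : SG r y ≤ sq2 r y := by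
    unfold SG; have := le_abs_self y; linarith
  have h2 : SG r y ^2 ≤ sq2 r y ^2 := pow_le_pow_left₀ (SG_pos hr).le h1 2
  calc TT r y ≤ sq2 r y ^2 := h2
    _ = y^2 + 2*r := sq2_sq hr

lemma exp_id (hr : 0 < r) : 2 * TT r y + r^2/(2 * TT r y) = 2*r + 2*y^2 := by
  have hT := TT_pos (y := y) hr
  have h1 := k1 (y := y) hr
  have : (2 * TT r y - r)^2 = 4 * TT r y * y^2 := by
    rw [h1]; unfold TT; ring
  field_simp
  nlinarith [this]

lemma ww_TT (hr : 0 < r) : ww r (TT r y) = -(y * sq2 r y)/TT r y := by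
  have hT := TT_pos (y := y) hr
  have h1 := k1 (y := y) hr
  have h2 := k2 (y := y) hr
  have key : r^2 - 4 * TT r y ^2 = -(4 * TT r y * (y * sq2 r y)) := by
    unfold TT at h1 h2 ⊢
    linear_combination (-(r + 2*SG r y^2)) * h1 + 2*SG r y*y*h2
  unfold ww
  rw [show r^2/(4*TT r y^2) - 1 = (r^2 - 4*TT r y^2)/(4*TT r y^2) by field_simp, key]
  field_simp

lemma pow_le_exp_aux (j : ℕ) (x : ℝ) (hx : 0 ≤ x) : x^j ≤ (j:ℝ)^j * Real.exp x := by
  rcases Nat.eq_zero_or_pos j with hj | hj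
  · subst hj; simpa using Real.one_le_exp hx
  · have hj0 : (0:ℝ) < j := by positivity
    have h1 : x/j ≤ Real.exp (x/j) := by
      linarith [Real.add_one_le_exp (x/j)]
    have h2 : x ≤ (j:ℝ) * Real.exp (x/j) := by
      rw [← div_le_iff₀' hj0]; exact h1
    calc x^j ≤ ((j:ℝ) * Real.exp (x/j))^j := pow_le_pow_left₀ hx h2 j
      _ = (j:ℝ)^j * Real.exp x := by
          rw [mul_pow, ← Real.exp_nat_mul]
          congr 2
          field_simp
  
lemma gauss_ptwise (j : ℕ) (y : ℝ) :
    y^(2*j) * Real.exp (-(2*y^2)) ≤ (j:ℝ)^j * Real.exp (-1*y^2) := by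
  have h1 : y^(2*j) = (y^2)^j := by rw [← pow_mul]
  have h2 := pow_le_exp_aux j (y^2) (sq_nonneg y)
  calc y^(2*j) * Real.exp (-(2*y^2)) = (y^2)^j * Real.exp (-(2*y^2)) := by rw [h1]
    _ ≤ ((j:ℝ)^j * Real.exp (y^2)) * Real.exp (-(2*y^2)) := by
        apply mul_le_mul_of_nonneg_right h2 (Real.exp_nonneg _)
    _ = (j:ℝ)^j * Real.exp (-1*y^2) := by
        rw [mul_assoc, ← Real.exp_add]; ring_nf

lemma gauss_integrable (j : ℕ) : Integrable (fun y : ℝ => y^(2*j) * Real.exp (-(2*y^2))) := by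
  refine Integrable.mono' (g := fun y => (j:ℝ)^j * Real.exp (-1*y^2))
    ((integrable_exp_neg_mul_sq one_pos).const_mul _) ?_ ?_
  · exact ((continuous_pow (2*j)).mul
      (Real.continuous_exp.comp (continuous_const.mul (continuous_pow 2)).neg)).aestronglyMeasurable
  · refine Filter.Eventually.of_forall (fun y => ?_)
    rw [Real.norm_eq_abs, abs_of_nonneg (mul_nonneg (Even.pow_nonneg ⟨j, two_mul j⟩ y) (Real.exp_nonneg _))]
    exact gauss_ptwise j y

lemma gauss_bound (j : ℕ) : ∫ y : ℝ, y^(2*j) * Real.exp (-(2*y^2))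
    ≤ (j:ℝ)^j * Real.sqrt π := by
  calc (∫ y : ℝ, y^(2*j) * Real.exp (-(2*y^2)))
      ≤ ∫ y : ℝ, (j:ℝ)^j * Real.exp (-1*y^2) := by
        exact integral_mono (gauss_integrable j)
          ((integrable_exp_neg_mul_sq one_pos).const_mul ((j:ℝ)^j)) (fun y => gauss_ptwise j y)
    _ = (j:ℝ)^j * Real.sqrt π := by
        rw [MeasureTheory.integral_const_mul, integral_gaussian]
        norm_num


lemma GG_contAt (n k : ℕ) (r : ℝ) (a b : ℕ) (t : ℝ) (ht : 0 < t) :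
    ContinuousAt (GG n k r a b) t := by
  have h4πt : 4*π*t ≠ 0 := by positivity
  have hrpow : ContinuousAt (fun s : ℝ => (4*π*s) ^ (-(n:ℝ)/2)) t := by
    have h1 : ContinuousAt (fun x : ℝ => x ^ (-(n:ℝ)/2)) (4*π*t) :=
      Real.continuousAt_rpow_const _ _ (Or.inl h4πt)
    exact h1.comp ((continuous_const.mul continuous_id).continuousAt)
  have hexp2 : ContinuousAt (fun s : ℝ => Real.exp (-r^2/(4*s))) t :=
    Real.continuous_exp.continuousAt.comp
      (ContinuousAt.div continuousAt_const (by fun_prop) (by positivity))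
  have huu : ContinuousAt (uu n r) t := by
    unfold uu
    exact (hrpow.mul (Real.continuous_exp.continuousAt.comp (by fun_prop))).mul hexp2
  have hww : ContinuousAt (ww r) t := by
    unfold ww
    exact (ContinuousAt.div continuousAt_const (by fun_prop) (by positivity)).sub continuousAt_const
  have hvv : ContinuousAt vv t := by
    unfold vv
    exact ContinuousAt.div continuousAt_const continuousAt_id (ne_of_gt ht)
  unfold GG
  have h1 : ContinuousAt (fun s : ℝ => s^k) t := (continuous_pow k).continuousAt
  exact (((h1.mul huu).pow 2).div continuousAt_id (ne_of_gt ht)).mul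
    (((hww.pow a).mul (hvv.pow b)).pow 2)

lemma GG_nonneg (n k : ℕ) (r : ℝ) (a b : ℕ) (t : ℝ) (ht : 0 < t) :
    0 ≤ GG n k r a b t := by
  unfold GG
  have h1 : 0 ≤ (t^k * uu n r t)^2 / t := div_nonneg (sq_nonneg _) ht.le
  exact mul_nonneg h1 (sq_nonneg _)

lemma GG_comp_eq (n k a b : ℕ) (r y : ℝ) (hr : 0 < r) :
    (2 * TT r y / sq2 r y) * GG n k r a b (TT r y)
      = 2/(4*π)^n * Real.exp (-(2*r)) * Real.exp (-(2*y^2))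
          * (y^(2*a) * sq2 r y^(2*a) / sq2 r y)
          * (TT r y ^(2*k) / TT r y ^(n + 2*a + 2*b)) := by
  set T := TT r y with hTdef
  set s := sq2 r y with hsdef
  have hT : 0 < T := TT_pos hr
  have hs : 0 < s := sq2_pos hr
  have h0 : (0:ℝ) < 4*π*T := by positivity
  have hX : ((4*π*T) ^ (-(n:ℝ)/2))^2 = 1/((4*π)^n * T^n) := by
    have h1 : ((4*π*T) ^ (-(n:ℝ)/2))^(2:ℕ) = ((4*π*T) ^ (-(n:ℝ)/2))^((2:ℕ):ℝ) :=
      (Real.rpow_natCast _ 2).symm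
    rw [h1, ← Real.rpow_mul h0.le]
    have h2 : (-(n:ℝ)/2) * ((2:ℕ):ℝ) = -(n:ℝ) := by push_cast; ring
    rw [h2, Real.rpow_neg h0.le, Real.rpow_natCast, mul_pow, one_div]
  have hE : Real.exp (-T) ^2 * Real.exp (-r^2/(4*T))^2
      = Real.exp (-(2*r)) * Real.exp (-(2*y^2)) := by
    rw [pow_two, pow_two, ← Real.exp_add, ← Real.exp_add, ← Real.exp_add, ← Real.exp_add]
    congr 1
    have hq : -r^2/(4*T) + -r^2/(4*T) = -(r^2/(2*T)) := by field_simp; ring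
    have := exp_id (y := y) hr
    rw [← hTdef] at this
    linarith [hq, this]
  have hwa : (ww r T^a)^2 = y^(2*a) * s^(2*a)/T^(2*a) := by
    rw [ww_TT hr, ← hTdef, ← hsdef, div_pow, div_pow, ← pow_mul, ← pow_mul,
      Even.neg_pow ⟨a, by ring⟩, mul_pow, Nat.mul_comm a 2]
  have hvb : (vv T^b)^2 = 1/T^(2*b) := by
    unfold vv
    rw [div_pow, div_pow, one_pow, one_pow, ← pow_mul, Nat.mul_comm b 2]
  rw [show GG n k r a b T = (T^k)^2 * (((4*π*T)^(-(n:ℝ)/2))^2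
      * (Real.exp (-T)^2 * Real.exp (-r^2/(4*T))^2)) / T * ((ww r T^a)^2 * (vv T^b)^2) from by
    unfold GG uu; ring]
  rw [hX, hE, hwa, hvb, ← pow_mul, pow_add, pow_add]
  field_simp
  ring

lemma two_pow_bound (p q : ℝ) (hp : 0 ≤ p) (hq : 0 ≤ q) (m : ℕ) :
    (p + q)^m ≤ 2^m * (p^m + q^m) := by
  calc (p+q)^m ≤ (2 * max p q)^m := by
        apply pow_le_pow_left₀ (by positivity)
        rcases le_total p q with h | h
        · rw [max_eq_right h]; linarith
        · rw [max_eq_left h]; linarith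
    _ = 2^m * (max p q)^m := mul_pow 2 _ m
    _ ≤ 2^m * (p^m + q^m) := by
        apply mul_le_mul_of_nonneg_left _ (by positivity)
        rcases le_total p q with h | h
        · rw [max_eq_right h]; nlinarith [pow_nonneg hp m, pow_nonneg hq m]
        · rw [max_eq_left h]; nlinarith [pow_nonneg hp m, pow_nonneg hq m]

lemma ptwise_key (n k a b : ℕ) (hab : k ≤ a + 2*b) :
    ∃ m e₀ : ℕ, ((m:ℝ) - 2*e₀ ≤ (k:ℝ) - n) ∧ ∀ r : ℝ, 1 < r → ∀ y : ℝ,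
      (2 * TT r y / sq2 r y) * GG n k r a b (TT r y)
        ≤ 2*4^e₀/(4*π)^n * Real.exp (-(2*r)) * (1/Real.sqrt r) * (1/r^(2*e₀))
            * (y^(2*a) * (y^2 + 2*r)^m) * Real.exp (-(2*y^2)) := by
  rcases le_or_gt (n + 2*a + 2*b) (2*k) with hc | hc
  · refine ⟨a + (2*k - (n + 2*a + 2*b)), 0, ?_, ?_⟩
    · have hmn : (a + (2*k - (n + 2*a + 2*b))) + n ≤ k + 2*0 := by omega
      have : (((a + (2*k - (n + 2*a + 2*b))) + n : ℕ):ℝ) ≤ ((k + 2*0 : ℕ):ℝ) :=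
        Nat.cast_le.mpr hmn
      push_cast at this ⊢
      linarith
    · intro r hr y
      have hr0 : (0:ℝ) < r := by linarith
      have hT : 0 < TT r y := TT_pos hr0
      have hs : 0 < sq2 r y := sq2_pos hr0
      have hy2a : (0:ℝ) ≤ y^(2*a) := Even.pow_nonneg ⟨a, by ring⟩ y
      set E := 2*k - (n + 2*a + 2*b) with hE
      have hsplit : TT r y ^(2*k) / TT r y ^(n + 2*a + 2*b) = TT r y ^ E := by
        rw [hE, div_eq_mul_inv]
        exact (pow_sub₀ _ (ne_of_gt hT) hc).symm
      have hs2a : sq2 r y ^(2*a) = (y^2+2*r)^a := by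
        rw [pow_mul, sq2_sq hr0]
      have h2a : 1/sq2 r y ≤ 1/Real.sqrt r := by
        apply one_div_le_one_div_of_le (Real.sqrt_pos.mpr hr0)
        exact Real.sqrt_le_sqrt (by nlinarith [sq_nonneg y])
      have h2b : TT r y ^E ≤ (y^2+2*r)^E := pow_le_pow_left₀ hT.le (TT_ub hr0) E
      have hAA : (0:ℝ) ≤ 2/(4*π)^n * Real.exp (-(2*r)) * Real.exp (-(2*y^2))
          * (y^(2*a) * (y^2+2*r)^a) :=
        mul_nonneg (mul_nonneg (mul_nonneg (by positivity) (Real.exp_nonneg _))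
          (Real.exp_nonneg _)) (mul_nonneg hy2a (by positivity))
      calc (2 * TT r y / sq2 r y) * GG n k r a b (TT r y)
          = (2/(4*π)^n * Real.exp (-(2*r)) * Real.exp (-(2*y^2)) * (y^(2*a) * (y^2+2*r)^a))
              * ((1/sq2 r y) * TT r y ^ E) := by
            rw [GG_comp_eq n k a b r y hr0, hsplit, hs2a]; ring
        _ ≤ (2/(4*π)^n * Real.exp (-(2*r)) * Real.exp (-(2*y^2)) * (y^(2*a) * (y^2+2*r)^a))
              * ((1/Real.sqrt r) * (y^2+2*r)^E) := by
            apply mul_le_mul_of_nonneg_left _ hAA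
            exact mul_le_mul h2a h2b (pow_nonneg hT.le E) (by positivity)
        _ = 2*4^0/(4*π)^n * Real.exp (-(2*r)) * (1/Real.sqrt r) * (1/r^(2*0))
              * (y^(2*a) * (y^2 + 2*r)^(a + E)) * Real.exp (-(2*y^2)) := by
            rw [pow_add]; norm_num; ring
  · refine ⟨a + (n + 2*a + 2*b - 2*k), n + 2*a + 2*b - 2*k, ?_, ?_⟩
    · have hmn : (a + (n + 2*a + 2*b - 2*k)) + n ≤ k + 2*(n + 2*a + 2*b - 2*k) := by omega
      have : (((a + (n + 2*a + 2*b - 2*k)) + n : ℕ):ℝ) ≤ ((k + 2*(n + 2*a + 2*b - 2*k) : ℕ):ℝ) :=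
        Nat.cast_le.mpr hmn
      push_cast at this ⊢
      linarith
    · intro r hr y
      have hr0 : (0:ℝ) < r := by linarith
      have hT : 0 < TT r y := TT_pos hr0
      have hs : 0 < sq2 r y := sq2_pos hr0
      have hy2 : (0:ℝ) < y^2 + 2*r := by positivity
      have hy2a : (0:ℝ) ≤ y^(2*a) := Even.pow_nonneg ⟨a, by ring⟩ y
      set e₀ := n + 2*a + 2*b - 2*k with he₀
      have hsplit : TT r y ^(2*k) / TT r y ^(n + 2*a + 2*b) = (1/TT r y) ^ e₀ := by
        have hpow : TT r y ^ (n + 2*a + 2*b) = TT r y ^(2*k) * TT r y ^ e₀ := by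
          rw [← pow_add]; congr 1; omega
        rw [hpow, one_div_pow]
        rw [div_mul_eq_div_div, div_self (pow_ne_zero _ (ne_of_gt hT))]
      have hinv : 1/TT r y ≤ 4*(y^2+2*r)/r^2 := by
        have h1 : (0:ℝ) < r^2/(4*(y^2+2*r)) := by positivity
        have := one_div_le_one_div_of_le h1 (TT_lb hr0)
        rwa [one_div_div] at this
      have h2b : (1/TT r y) ^ e₀ ≤ (4*(y^2+2*r)/r^2)^e₀ :=
        pow_le_pow_left₀ (by positivity) hinv e₀
      have hexpand : (4*(y^2+2*r)/r^2)^e₀ = 4^e₀ * (y^2+2*r)^e₀ / r^(2*e₀) := by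
        rw [div_pow, mul_pow, pow_mul]
      have hs2a : sq2 r y ^(2*a) = (y^2+2*r)^a := by
        rw [pow_mul, sq2_sq hr0]
      have h2a : 1/sq2 r y ≤ 1/Real.sqrt r := by
        apply one_div_le_one_div_of_le (Real.sqrt_pos.mpr hr0)
        exact Real.sqrt_le_sqrt (by nlinarith [sq_nonneg y])
      have hAA : (0:ℝ) ≤ 2/(4*π)^n * Real.exp (-(2*r)) * Real.exp (-(2*y^2))
          * (y^(2*a) * (y^2+2*r)^a) :=
        mul_nonneg (mul_nonneg (mul_nonneg (by positivity) (Real.exp_nonneg _))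
          (Real.exp_nonneg _)) (mul_nonneg hy2a (by positivity))
      calc (2 * TT r y / sq2 r y) * GG n k r a b (TT r y)
          = (2/(4*π)^n * Real.exp (-(2*r)) * Real.exp (-(2*y^2)) * (y^(2*a) * (y^2+2*r)^a))
              * ((1/sq2 r y) * (1/TT r y) ^ e₀) := by
            rw [GG_comp_eq n k a b r y hr0, hsplit, hs2a]; ring
        _ ≤ (2/(4*π)^n * Real.exp (-(2*r)) * Real.exp (-(2*y^2)) * (y^(2*a) * (y^2+2*r)^a))
              * ((1/Real.sqrt r) * (4^e₀ * (y^2+2*r)^e₀ / r^(2*e₀))) := by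
            apply mul_le_mul_of_nonneg_left _ hAA
            refine mul_le_mul h2a ?_ (pow_nonneg (by positivity) e₀) (by positivity)
            rw [← hexpand]; exact h2b
        _ = 2*4^e₀/(4*π)^n * Real.exp (-(2*r)) * (1/Real.sqrt r) * (1/r^(2*e₀))
              * (y^(2*a) * (y^2 + 2*r)^(a + e₀)) * Real.exp (-(2*y^2)) := by
            rw [pow_add]; ring


lemma TT_continuous (r : ℝ) : Continuous (TT r) := by
  unfold TT SG sq2
  have h : Continuous (fun y : ℝ => Real.sqrt (y^2 + 2*r)) :=
    Real.continuous_sqrt.comp (by fun_prop)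
  fun_prop

lemma monomial_bound (n k a b : ℕ) (hab : k ≤ a + 2*b) :
    ∃ C : ℝ, 0 < C ∧ ∀ r : ℝ, 1 < r →
      IntegrableOn (GG n k r a b) (Ioi 0) ∧
      ∫ t in Ioi 0, GG n k r a b t
        ≤ C * (r ^ (((k:ℝ) - n)/2 - 1/4) * Real.exp (-r))^2 := by
  obtain ⟨m, e₀, hme, hpt⟩ := ptwise_key n k a b hab
  set C₁ : ℝ := 2^m * Real.sqrt π * (((a+m:ℕ):ℝ)^(a+m) + 2^m * (a:ℝ)^a) + 1 with hC₁
  set K : ℝ := 2*4^e₀/(4*π)^n with hK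
  have hKpos : 0 < K := by rw [hK]; positivity
  have hC₁pos : 0 < C₁ := by
    rw [hC₁]; positivity
  refine ⟨K * C₁, by positivity, ?_⟩
  intro r hr
  have hr0 : (0:ℝ) < r := by linarith
  have hsqr : 0 < Real.sqrt r := Real.sqrt_pos.mpr hr0
  have himg : TT r '' univ = Ioi 0 := by rw [image_univ, TT_range hr0]
  have hderiv : ∀ y ∈ (univ : Set ℝ), HasDerivWithinAt (TT r) (2*TT r y/sq2 r y) univ y :=
    fun y _ => (hasDerivAt_TT hr0).hasDerivWithinAt
  have hinj : InjOn (TT r) univ := (TT_strictMono hr0).injective.injOn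
  have habs : (fun y => |2*TT r y/sq2 r y| • GG n k r a b (TT r y))
      = fun y => (2*TT r y/sq2 r y) * GG n k r a b (TT r y) := by
    funext y
    rw [smul_eq_mul,
      abs_of_pos (div_pos (by linarith [TT_pos (r:=r) (y:=y) hr0]) (sq2_pos hr0))]
  set B : ℝ := K * Real.exp (-(2*r)) * (1/Real.sqrt r) * (1/r^(2*e₀)) with hB
  have hBpos : 0 < B := by rw [hB]; positivity
  set Φ : ℝ → ℝ := fun y => B * 2^m * (y^(2*(a+m)) * Real.exp (-(2*y^2)))
      + (B * 2^m * (2*r)^m) * (y^(2*a) * Real.exp (-(2*y^2))) with hΦ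
  have hΦint : Integrable Φ :=
    ((gauss_integrable (a+m)).const_mul _).add ((gauss_integrable a).const_mul _)
  have hptΦ : ∀ y, (2*TT r y/sq2 r y) * GG n k r a b (TT r y) ≤ Φ y := by
    intro y
    have h1 := hpt r hr y
    have hy2a : (0:ℝ) ≤ y^(2*a) := Even.pow_nonneg ⟨a, by ring⟩ y
    have h2 : (y^2+2*r)^m ≤ 2^m * ((y^2)^m + (2*r)^m) :=
      two_pow_bound _ _ (sq_nonneg y) (by positivity) m
    have hmerge : y^(2*a) * (y^2)^m = y^(2*(a+m)) := by
      rw [← pow_mul, ← pow_add]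
      congr 1; omega
    calc (2*TT r y/sq2 r y) * GG n k r a b (TT r y)
        ≤ B * (y^(2*a) * (y^2+2*r)^m) * Real.exp (-(2*y^2)) := by
          rw [hB, hK]; exact h1
      _ ≤ B * (2^m * (y^(2*(a+m)) + (2*r)^m * y^(2*a))) * Real.exp (-(2*y^2)) := by
          apply mul_le_mul_of_nonneg_right _ (Real.exp_nonneg _)
          apply mul_le_mul_of_nonneg_left _ hBpos.le
          calc y^(2*a) * (y^2+2*r)^m ≤ y^(2*a) * (2^m * ((y^2)^m + (2*r)^m)) :=
                mul_le_mul_of_nonneg_left h2 hy2a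
            _ = 2^m * (y^(2*(a+m)) + (2*r)^m * y^(2*a)) := by
                rw [← hmerge]; ring
      _ = Φ y := by rw [hΦ]; ring
  have h0le : ∀ y, 0 ≤ (2*TT r y/sq2 r y) * GG n k r a b (TT r y) := fun y =>
    mul_nonneg (le_of_lt (div_pos (by linarith [TT_pos (r:=r) (y:=y) hr0]) (sq2_pos hr0)))
      (GG_nonneg n k r a b _ (TT_pos hr0))
  have hcont : Continuous fun y => (2*TT r y/sq2 r y) * GG n k r a b (TT r y) := by
    have hTTc : Continuous (TT r) := TT_continuous r
    have hsq2c : Continuous (sq2 r) := Real.continuous_sqrt.comp (by fun_prop)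
    have hD : Continuous fun y => 2*TT r y/sq2 r y :=
      (continuous_const.mul hTTc).div hsq2c (fun y => ne_of_gt (sq2_pos hr0))
    have hGT : Continuous fun y => GG n k r a b (TT r y) := by
      rw [continuous_iff_continuousAt]
      exact fun y => (GG_contAt n k r a b _ (TT_pos hr0)).comp hTTc.continuousAt
    exact hD.mul hGT
  have hIntComp : Integrable (fun y => |2*TT r y/sq2 r y| • GG n k r a b (TT r y)) := by
    rw [habs]
    exact Integrable.mono' hΦint hcont.aestronglyMeasurable
      (Filter.Eventually.of_forall (fun y => by
        rw [Real.norm_eq_abs, abs_of_nonneg (h0le y)]; exact hptΦ y))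
  constructor
  · rw [← himg, integrableOn_image_iff_integrableOn_abs_deriv_smul MeasurableSet.univ hderiv hinj]
    rw [integrableOn_univ]
    exact hIntComp
  · have hval : ∫ t in Ioi 0, GG n k r a b t
        = ∫ y, (2*TT r y/sq2 r y) * GG n k r a b (TT r y) := by
      rw [← himg, integral_image_eq_integral_abs_deriv_smul MeasurableSet.univ hderiv hinj,
        setIntegral_univ, habs]
    rw [hval]
    have hstep1 : ∫ y, (2*TT r y/sq2 r y) * GG n k r a b (TT r y) ≤ ∫ y, Φ y :=
      integral_mono_of_nonneg (Filter.Eventually.of_forall h0le) hΦint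
        (Filter.Eventually.of_forall hptΦ)
    have hstep2 : ∫ y, Φ y ≤ B * 2^m * (((a+m:ℕ):ℝ)^(a+m) * Real.sqrt π)
        + (B * 2^m * (2*r)^m) * ((a:ℝ)^a * Real.sqrt π) := by
      rw [hΦ, integral_add ((gauss_integrable (a+m)).const_mul _)
        ((gauss_integrable a).const_mul _), MeasureTheory.integral_const_mul,
        MeasureTheory.integral_const_mul]
      have g1 := gauss_bound (a+m)
      have g2 := gauss_bound a
      have hc1 : (0:ℝ) ≤ B * 2^m := by positivity
      have hc2 : (0:ℝ) ≤ B * 2^m * (2*r)^m := by positivity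
      push_cast
      exact add_le_add (mul_le_mul_of_nonneg_left (by push_cast at g1 ⊢; linarith) hc1)
        (mul_le_mul_of_nonneg_left (by push_cast at g2 ⊢; linarith) hc2)
    have hrm1 : (1:ℝ) ≤ r^m := one_le_pow₀ hr.le
    have hstep3 : B * 2^m * (((a+m:ℕ):ℝ)^(a+m) * Real.sqrt π)
        + (B * 2^m * (2*r)^m) * ((a:ℝ)^a * Real.sqrt π) ≤ C₁ * (B * r^m) := by
      have e1 : B * 2^m * (((a+m:ℕ):ℝ)^(a+m) * Real.sqrt π)
          ≤ (2^m * Real.sqrt π * ((a+m:ℕ):ℝ)^(a+m)) * (B * r^m) := by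
        rw [show B * 2^m * (((a+m:ℕ):ℝ)^(a+m) * Real.sqrt π)
            = (2^m * Real.sqrt π * ((a+m:ℕ):ℝ)^(a+m)) * (B * 1) from by ring]
        apply mul_le_mul_of_nonneg_left _ (by positivity)
        exact mul_le_mul_of_nonneg_left hrm1 hBpos.le
      have e2 : (B * 2^m * (2*r)^m) * ((a:ℝ)^a * Real.sqrt π)
          = (2^m * Real.sqrt π * (2^m * (a:ℝ)^a)) * (B * r^m) := by
        rw [mul_pow]; ring
      have e3 : (0:ℝ) ≤ B * r^m := by positivity
      rw [e2, hC₁]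
      nlinarith [e1, e3, mul_le_mul_of_nonneg_right (le_refl (2^m * Real.sqrt π * (2^m * (a:ℝ)^a))) e3]
    have hfinal : C₁ * (B * r^m) ≤ (K * C₁) * (r ^ (((k:ℝ) - n)/2 - 1/4) * Real.exp (-r))^2 := by
      have hXeq : (r ^ (((k:ℝ) - n)/2 - 1/4) * Real.exp (-r))^2
          = r ^ ((((k:ℝ) - n)/2 - 1/4)*2) * Real.exp (-(2*r)) := by
        rw [mul_pow, ← Real.rpow_natCast (r ^ (((k:ℝ) - n)/2 - 1/4)) 2,
          ← Real.rpow_mul hr0.le, pow_two, ← Real.exp_add]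
        have e1 : (((k:ℝ) - n)/2 - 1/4) * ((2:ℕ):ℝ) = (((k:ℝ) - n)/2 - 1/4) * 2 := by norm_num
        have e2 : -r + -r = -(2*r) := by ring
        rw [e1, e2]
      have hpow : (1/Real.sqrt r) * (1/r^(2*e₀)) * r^m = r ^ ((m:ℝ) - 2*e₀ - 1/2) := by
        have h1 : (1:ℝ)/Real.sqrt r = r ^ (-(1/2) : ℝ) := by
          rw [Real.rpow_neg hr0.le, Real.sqrt_eq_rpow, one_div]
        have h2 : (1:ℝ)/r^(2*e₀) = r ^ (-((2*e₀:ℕ):ℝ)) := by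
          rw [Real.rpow_neg hr0.le, Real.rpow_natCast, one_div]
        have h3 : r^m = r ^ ((m:ℕ) : ℝ) := (Real.rpow_natCast r m).symm
        rw [h1, h2, h3, ← Real.rpow_add hr0, ← Real.rpow_add hr0]
        congr 1; push_cast; ring
      have hexp : r ^ ((m:ℝ) - 2*e₀ - 1/2) ≤ r ^ ((((k:ℝ) - n)/2 - 1/4)*2) :=
        Real.rpow_le_rpow_of_exponent_le hr.le (by linarith)
      have hBr : B * r^m ≤ K * (r ^ (((k:ℝ) - n)/2 - 1/4) * Real.exp (-r))^2 := by
        rw [hXeq, hB]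
        calc K * Real.exp (-(2*r)) * (1/Real.sqrt r) * (1/r^(2*e₀)) * r^m
            = (K * Real.exp (-(2*r))) * ((1/Real.sqrt r) * (1/r^(2*e₀)) * r^m) := by ring
          _ = (K * Real.exp (-(2*r))) * r ^ ((m:ℝ) - 2*e₀ - 1/2) := by rw [hpow]
          _ ≤ (K * Real.exp (-(2*r))) * r ^ ((((k:ℝ) - n)/2 - 1/4)*2) := by
              apply mul_le_mul_of_nonneg_left hexp (by positivity)
          _ = K * (r ^ ((((k:ℝ) - n)/2 - 1/4)*2) * Real.exp (-(2*r))) := by ring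
      calc C₁ * (B * r^m) ≤ C₁ * (K * (r ^ (((k:ℝ) - n)/2 - 1/4) * Real.exp (-r))^2) :=
            mul_le_mul_of_nonneg_left hBr hC₁pos.le
        _ = (K * C₁) * (r ^ (((k:ℝ) - n)/2 - 1/4) * Real.exp (-r))^2 := by ring
    exact le_trans hstep1 (le_trans hstep2 (le_trans hstep3 hfinal))

lemma sq_list_sum (l : List ℝ) : (l.sum)^2 ≤ 2^l.length * (l.map (fun x => x^2)).sum := by
  induction l with
  | nil => simp
  | cons x l ih =>
    simp only [List.sum_cons, List.length_cons, List.map_cons]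
    have h3 : (0:ℝ) ≤ (l.map (fun x => x^2)).sum := by
      apply List.sum_nonneg
      intro z hz
      simp only [List.mem_map] at hz
      obtain ⟨w, _, rfl⟩ := hz
      positivity
    have h4 : (1:ℝ) ≤ 2^l.length := one_le_pow₀ (by norm_num)
    calc (x + l.sum)^2 ≤ 2*x^2 + 2*(l.sum)^2 := by nlinarith [sq_nonneg (x - l.sum)]
      _ ≤ 2*x^2 + 2*(2^l.length * (l.map (fun x => x^2)).sum) := by nlinarith [ih]
      _ ≤ 2^(l.length+1) * (x^2 + (l.map (fun x => x^2)).sum) := by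
          have hp : (2:ℝ)^(l.length+1) = 2*2^l.length := by rw [pow_succ]; ring
          rw [hp]
          nlinarith [mul_nonneg (sub_nonneg.mpr h4) (sq_nonneg x)]

lemma HH_expand (n k : ℕ) (r t : ℝ) (ht : 0 < t) (l : List (ℝ × ℕ × ℕ)) :
    (t^k * uu n r t)^2 / t * ((l.map (fun e => mn r e t)).map (fun x => x^2)).sum
      = HH n k r l t := by
  induction l with
  | nil => simp [HH]
  | cons e l ih =>
    simp only [HH, List.map_cons, List.sum_cons] at *
    rw [mul_add, ih]
    congr 1
    unfold mn GG
    ring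

lemma integrand_le (n k : ℕ) (r t : ℝ) (ht : 0 < t) (l : List (ℝ × ℕ × ℕ)) :
    (t^k * (uu n r t * SS r l t))^2 / t ≤ 2^l.length * HH n k r l t := by
  have hM : (0:ℝ) ≤ (t^k * uu n r t)^2 / t := div_nonneg (sq_nonneg _) ht.le
  have h1 : (t^k * (uu n r t * SS r l t))^2 / t
      = (t^k * uu n r t)^2 / t * (SS r l t)^2 := by
    field_simp
  have h2 := sq_list_sum (l.map (fun e => mn r e t))
  rw [List.length_map] at h2
  calc (t^k * (uu n r t * SS r l t))^2 / t
      = (t^k * uu n r t)^2 / t * (SS r l t)^2 := h1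
    _ ≤ (t^k * uu n r t)^2 / t * (2^l.length * ((l.map (fun e => mn r e t)).map (fun x => x^2)).sum) :=
        mul_le_mul_of_nonneg_left h2 hM
    _ = 2^l.length * ((t^k * uu n r t)^2 / t * ((l.map (fun e => mn r e t)).map (fun x => x^2)).sum) := by ring
    _ = 2^l.length * HH n k r l t := by rw [HH_expand n k r t ht]

lemma HH_bound (n k : ℕ) (l : List (ℝ × ℕ × ℕ)) (hl : ∀ e ∈ l, k ≤ e.2.1 + 2*e.2.2) :
    ∃ C : ℝ, 0 < C ∧ ∀ r : ℝ, 1 < r →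
      IntegrableOn (HH n k r l) (Ioi 0) ∧
      ∫ t in Ioi 0, HH n k r l t ≤ C * (r ^ (((k:ℝ) - n)/2 - 1/4) * Real.exp (-r))^2 := by
  induction l with
  | nil =>
    refine ⟨1, one_pos, fun r hr => ?_⟩
    constructor
    · have hz : HH n k r [] = fun _ => (0:ℝ) := by funext t; simp [HH]
      rw [hz]
      exact integrableOn_zero
    · simp only [HH, List.map_nil, List.sum_nil, integral_zero]
      positivity
  | cons e l ih =>
    obtain ⟨C₂, hC₂, h₂⟩ := ih (fun f hf => hl f (List.mem_cons_of_mem e hf))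
    obtain ⟨C₃, hC₃, h₃⟩ := monomial_bound n k e.2.1 e.2.2 (hl e List.mem_cons_self)
    refine ⟨e.1^2 * C₃ + C₂, by positivity, fun r hr => ?_⟩
    obtain ⟨hint₂, hval₂⟩ := h₂ r hr
    obtain ⟨hint₃, hval₃⟩ := h₃ r hr
    have hfun : HH n k r (e :: l) = fun t => e.1^2 * GG n k r e.2.1 e.2.2 t + HH n k r l t := by
      funext t
      simp [HH]
    constructor
    · rw [hfun]
      exact (hint₃.const_mul _).add hint₂
    · rw [hfun]
      rw [integral_add (hint₃.const_mul _) hint₂, MeasureTheory.integral_const_mul]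
      have : e.1^2 * ∫ t in Ioi 0, GG n k r e.2.1 e.2.2 t
          ≤ e.1^2 * (C₃ * (r ^ (((k:ℝ) - n)/2 - 1/4) * Real.exp (-r))^2) :=
        mul_le_mul_of_nonneg_left hval₃ (sq_nonneg _)
      nlinarith [hval₂]

lemma core (n k : ℕ) :
    ∃ C : ℝ, 0 < C ∧ ∀ r : ℝ, 1 < r →
      (∫ t in Ioi 0, (t ^ k * (uu n r t * SS r (steps (-(n:ℝ)/2) k) t)) ^ 2 / t)
        ≤ C * (r ^ (((k:ℝ) - n)/2 - 1/4) * Real.exp (-r))^2 := by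
  obtain ⟨C, hC, h⟩ := HH_bound n k (steps (-(n:ℝ)/2) k) (invariant _ k)
  refine ⟨2^(steps (-(n:ℝ)/2) k).length * C, by positivity, fun r hr => ?_⟩
  obtain ⟨hint, hval⟩ := h r hr
  have hmono : (∫ t in Ioi 0, (t ^ k * (uu n r t * SS r (steps (-(n:ℝ)/2) k) t)) ^ 2 / t)
      ≤ ∫ t in Ioi 0, 2^(steps (-(n:ℝ)/2) k).length * HH n k r (steps (-(n:ℝ)/2) k) t := by
    apply integral_mono_of_nonneg
    · rw [Filter.EventuallyLE, ae_restrict_iff' measurableSet_Ioi]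
      exact Filter.Eventually.of_forall (fun t ht => div_nonneg (sq_nonneg _) (le_of_lt ht))
    · exact hint.const_mul _
    · rw [Filter.EventuallyLE, ae_restrict_iff' measurableSet_Ioi]
      exact Filter.Eventually.of_forall (fun t ht => integrand_le n k r t ht _)
  calc (∫ t in Ioi 0, (t ^ k * (uu n r t * SS r (steps (-(n:ℝ)/2) k) t)) ^ 2 / t)
      ≤ ∫ t in Ioi 0, 2^(steps (-(n:ℝ)/2) k).length * HH n k r (steps (-(n:ℝ)/2) k) t := hmono
    _ = 2^(steps (-(n:ℝ)/2) k).length * ∫ t in Ioi 0, HH n k r (steps (-(n:ℝ)/2) k) t :=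
        MeasureTheory.integral_const_mul _ _
    _ ≤ 2^(steps (-(n:ℝ)/2) k).length * (C * (r ^ (((k:ℝ) - n)/2 - 1/4) * Real.exp (-r))^2) :=
        mul_le_mul_of_nonneg_left hval (by positivity)
    _ = (2^(steps (-(n:ℝ)/2) k).length * C) * (r ^ (((k:ℝ) - n)/2 - 1/4) * Real.exp (-r))^2 := by
        ring


end St19
end


open St19 in
theorem stmt19 (n : ℕ) (hn : 0 < n) (k : ℕ) (hk : 1 ≤ k) :
    ∃ C : ℝ, 0 < C ∧ ∀ x y : EuclideanSpace ℝ (Fin n), ‖x - y‖ > 1 →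
      (∫ t in Set.Ioi (0:ℝ),
          (t ^ k * iteratedDeriv k
            (fun s => (4 * π * s) ^ (-(n : ℝ) / 2) * Real.exp (-x ⟨0, hn⟩ - y ⟨0, hn⟩) *
              Real.exp (-s) * Real.exp (-‖x - y‖ ^ 2 / (4 * s))) t) ^ 2 / t) ^ ((1:ℝ) / 2) ≤
        C * ‖x - y‖ ^ (((k : ℝ) - n) / 2 - 1 / 4) *
          Real.exp (-x ⟨0, hn⟩ - y ⟨0, hn⟩ - ‖x - y‖) := by
  obtain ⟨C, hC, hbound⟩ := core n k
  refine ⟨Real.sqrt C, Real.sqrt_pos.mpr hC, ?_⟩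
  intro x y hxy
  set c : ℝ := Real.exp (-x ⟨0, hn⟩ - y ⟨0, hn⟩) with hc
  set r : ℝ := ‖x - y‖ with hr
  have hr1 : 1 < r := hxy
  have hr0 : (0:ℝ) < r := by linarith
  have hcpos : 0 < c := Real.exp_pos _
  set l := steps (-(n:ℝ)/2) k with hl
  set X : ℝ := r ^ (((k:ℝ) - n)/2 - 1/4) * Real.exp (-r) with hX
  have hXpos : 0 < X := by rw [hX]; positivity
  have hFeq : (fun s => (4 * π * s) ^ (-(n : ℝ) / 2) * Real.exp (-x ⟨0, hn⟩ - y ⟨0, hn⟩) *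
      Real.exp (-s) * Real.exp (-‖x - y‖ ^ 2 / (4 * s))) = FF n c r := rfl
  have heqOn : Set.EqOn
      (fun t => (t ^ k * iteratedDeriv k (FF n c r) t) ^ 2 / t)
      (fun t => c^2 * ((t ^ k * (uu n r t * SS r l t)) ^ 2 / t)) (Ioi 0) := by
    intro t ht
    simp only
    rw [iter_deriv_eq n c r k t ht]
    have hFc : FF n c r t = c * uu n r t := by unfold FF uu; ring
    rw [hFc]
    ring
  rw [hFeq, MeasureTheory.setIntegral_congr_fun measurableSet_Ioi heqOn,
    MeasureTheory.integral_const_mul]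
  have hI0 : 0 ≤ ∫ t in Ioi 0, (t ^ k * (uu n r t * SS r l t)) ^ 2 / t :=
    setIntegral_nonneg measurableSet_Ioi (fun t ht => div_nonneg (sq_nonneg _) (le_of_lt ht))
  have hIle := hbound r hr1
  have hstep : (c^2 * ∫ t in Ioi 0, (t ^ k * (uu n r t * SS r l t)) ^ 2 / t) ^ ((1:ℝ)/2)
      ≤ (c^2 * (C * X^2)) ^ ((1:ℝ)/2) := by
    apply Real.rpow_le_rpow (by positivity) _ (by norm_num)
    exact mul_le_mul_of_nonneg_left hIle (sq_nonneg c)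
  have hfin : (c^2 * (C * X^2)) ^ ((1:ℝ)/2) = Real.sqrt C * X * c := by
    rw [← Real.sqrt_eq_rpow, Real.sqrt_mul (sq_nonneg c), Real.sqrt_sq hcpos.le,
      Real.sqrt_mul hC.le, Real.sqrt_sq hXpos.le]
    ring
  have hrhs : Real.sqrt C * r ^ (((k:ℝ) - n)/2 - 1/4) * Real.exp (-x ⟨0, hn⟩ - y ⟨0, hn⟩ - r)
      = Real.sqrt C * X * c := by
    rw [hX, hc, show -x ⟨0, hn⟩ - y ⟨0, hn⟩ - r = (-r) + (-x ⟨0, hn⟩ - y ⟨0, hn⟩) from by ring,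
      Real.exp_add]
    ring
  rw [hrhs]
  exact le_trans hstep (le_of_eq hfin)
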